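/- For all integers r ≥ 3 and n ≥ 3: Σ_{m=0}^{r−1} (r choose m)·(π^{m/2}/Γ(m/2+1))·n^{m/2} ≤ (r·π^{(r−1)/2}/Γ((r+1)/2))·n^{(r−1)/2} + e^{330}·(0.9)^{r}·n^{(r−2)/2}, where Γ denotes the gamma function. -/

import Mathlib

set_option linter.deprecated false
set_option maxHeartbeats 800000


private lemma rpow_half_nat {x : ℝ} (hx : 0 ≤ x) (m : ℕ) :
    x ^ ((m : ℝ) / 2) = Real.sqrt x ^ m := by
  rw [Real.sqrt_eq_rpow, ← Real.rpow_natCast (x ^ ((1:ℝ)/2)) m, ← Real.rpow_mul hx]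
  congr 1
  ring

private lemma fac_div_two_le_Gamma (q : ℕ) :
    (q.factorial : ℝ) / 2 ≤ Real.Gamma ((q : ℝ) + 3/2) := by
  induction q with
  | zero =>
    have h : ((0:ℕ) : ℝ) + 3/2 = 1/2 + 1 := by norm_num
    rw [h, Real.Gamma_add_one (by norm_num), Real.Gamma_one_half_eq]
    have h1 : (0:ℝ) ≤ Real.pi := Real.pi_pos.le
    have h2 := Real.sq_sqrt h1
    have h3 := Real.sqrt_nonneg Real.pi
    have h4 := Real.pi_gt_three
    simp only [Nat.factorial_zero, Nat.cast_one]
    nlinarith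
  | succ q ih =>
    have h : ((q+1 : ℕ) : ℝ) + 3/2 = ((q:ℝ) + 3/2) + 1 := by push_cast; ring
    have hne : ((q:ℝ) + 3/2) ≠ 0 := by positivity
    rw [h, Real.Gamma_add_one hne]
    have hfac : (0:ℝ) < q.factorial := by positivity
    have hG : (0:ℝ) < Real.Gamma ((q:ℝ) + 3/2) := lt_of_lt_of_le (by positivity) ih
    have h5 : ((q:ℝ) + 1) * ((q.factorial : ℝ)/2) ≤ ((q:ℝ) + 3/2) * Real.Gamma ((q:ℝ)+3/2) := by
      apply mul_le_mul (by linarith) ih (by positivity) (by positivity)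
    calc ((q+1).factorial : ℝ) / 2 = ((q:ℝ)+1) * ((q.factorial:ℝ)/2) := by
          rw [Nat.factorial_succ]; push_cast; ring
      _ ≤ _ := h5

private lemma half_fac_le_Gamma (m : ℕ) :
    ((m/2).factorial : ℝ) / 2 ≤ Real.Gamma ((m : ℝ) / 2 + 1) := by
  rcases Nat.even_or_odd m with ⟨q, rfl⟩ | ⟨q, rfl⟩
  · have h1 : (q + q) / 2 = q := by omega
    have h2 : ((q + q : ℕ) : ℝ) / 2 + 1 = (q : ℝ) + 1 := by push_cast; ring
    rw [h1, h2, Real.Gamma_nat_eq_factorial]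
    have : (0:ℝ) < q.factorial := by positivity
    linarith
  · have h1 : (2*q + 1) / 2 = q := by omega
    have h2 : ((2*q + 1 : ℕ) : ℝ) / 2 + 1 = (q : ℝ) + 3/2 := by push_cast; ring
    rw [h1, h2]
    exact fac_div_two_le_Gamma q


private lemma exp_385 : Real.exp 0.385 ≤ 1.5337 := by
  have h1 : (0.8075:ℝ) ≤ Real.exp (-0.1925) := by
    have := Real.add_one_le_exp (-0.1925 : ℝ); linarith
  have h2 : Real.exp 0.1925 * Real.exp (-0.1925) = 1 := by
    rw [← Real.exp_add]; norm_num
  have h3 : Real.exp 0.1925 ≤ 1.2384 := by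
    nlinarith [Real.exp_pos (0.1925:ℝ)]
  have h4 : Real.exp 0.385 = Real.exp 0.1925 * Real.exp 0.1925 := by
    rw [← Real.exp_add]; norm_num
  nlinarith [Real.exp_pos (0.1925:ℝ)]

private lemma sqrt3_fact : (1.01 : ℝ) * 1.5337 ≤ 0.9 * Real.sqrt 3 := by
  have h1 : Real.sqrt 3 ^ 2 = 3 := Real.sq_sqrt (by norm_num)
  have h2 : (0:ℝ) ≤ Real.sqrt 3 := Real.sqrt_nonneg 3
  nlinarith

private lemma sp_s3 : Real.sqrt Real.pi * Real.sqrt 3 ≤ 3.08 := by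
  have h1 : Real.sqrt Real.pi ^ 2 = Real.pi := Real.sq_sqrt Real.pi_pos.le
  have h2 : Real.sqrt 3 ^ 2 = 3 := Real.sq_sqrt (by norm_num)
  have h3 : (0:ℝ) ≤ Real.sqrt Real.pi := Real.sqrt_nonneg _
  have h4 : (0:ℝ) ≤ Real.sqrt 3 := Real.sqrt_nonneg _
  have h5 : Real.pi < 3.15 := by
    have := Real.pi_lt_d2; norm_num at this ⊢; linarith
  nlinarith [sq_nonneg (Real.sqrt Real.pi * Real.sqrt 3 - 3.08)]

private lemma big_exp : (4800 : ℝ) * Real.exp 64 ≤ Real.exp 330 := by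
  have h1 : Real.exp 330 = Real.exp 64 * (Real.exp 133 * Real.exp 133) := by
    rw [← Real.exp_add, ← Real.exp_add]; norm_num
  have h2 : (134:ℝ) ≤ Real.exp 133 := by
    have := Real.add_one_le_exp (133:ℝ); linarith
  have h3 : (134:ℝ)*134 ≤ Real.exp 133 * Real.exp 133 :=
    mul_le_mul h2 h2 (by norm_num) (Real.exp_pos 133).le
  have h4 : Real.exp 64 * (134*134) ≤ Real.exp 64 * (Real.exp 133 * Real.exp 133) :=
    mul_le_mul_of_nonneg_left h3 (Real.exp_pos 64).le
  have h5 : (4800:ℝ) * Real.exp 64 ≤ Real.exp 64 * (134*134) := by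
    nlinarith [Real.exp_pos (64:ℝ)]
  linarith



private lemma claim (s m : ℕ) (hs : 2 ≤ s) (hm : m < s) :
    2 * (((s:ℝ)+1) * Real.sqrt Real.pi)^m * ((s:ℝ)+1) * 3 * (Real.sqrt 3)^m
      ≤ Real.exp 330 * (0.9 * Real.sqrt 3)^(s+1) * (m.factorial : ℝ)
          * ((m/2).factorial : ℝ) := by
  set S : ℝ := (s:ℝ) + 1 with hS
  set sp : ℝ := Real.sqrt Real.pi with hsp
  set s3 : ℝ := Real.sqrt 3 with hs3
  set q : ℕ := m / 2 with hq
  have hSpos : (0:ℝ) < S := by positivity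
  have hsp0 : (0:ℝ) ≤ sp := Real.sqrt_nonneg _
  have hs30 : (0:ℝ) ≤ s3 := Real.sqrt_nonneg _
  set a : ℝ := S * sp * s3 / 8 with ha
  have ha0 : 0 ≤ a := by positivity
  have h8 : (8:ℝ)^m ≤ 8 * 64^q := by
    calc (8:ℝ)^m ≤ 8^(2*q+1) := by
          apply pow_le_pow_right₀ (by norm_num) (by omega)
      _ = 8 * 64^q := by rw [pow_succ, pow_mul]; norm_num; ring
  have h64 : (64:ℝ)^q ≤ (q.factorial : ℝ) * Real.exp 64 := by
    have := Real.pow_div_factorial_le_exp (x := (64:ℝ)) (by norm_num) q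
    have hf : (0:ℝ) < q.factorial := by positivity
    rw [div_le_iff₀ hf] at this
    linarith [this]
  have haW : a^m ≤ (m.factorial : ℝ) * Real.exp a := by
    have := Real.pow_div_factorial_le_exp (x := a) ha0 m
    have hf : (0:ℝ) < m.factorial := by positivity
    rw [div_le_iff₀ hf] at this
    linarith [this]
  have hexpa : Real.exp a ≤ (1.5337:ℝ)^(s+1) := by
    have h1 : a ≤ 0.385 * S := by
      have : S * (sp * s3) ≤ S * 3.08 :=
        mul_le_mul_of_nonneg_left sp_s3 hSpos.le
      rw [ha]; nlinarith
    have h2 : Real.exp a ≤ Real.exp (((s+1 : ℕ):ℝ) * 0.385) := by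
      apply Real.exp_le_exp.2
      push_cast
      linarith
    rw [Real.exp_nat_mul] at h2
    calc Real.exp a ≤ Real.exp 0.385 ^ (s+1) := h2
      _ ≤ (1.5337:ℝ)^(s+1) := by
          apply pow_le_pow_left₀ (Real.exp_pos _).le exp_385
  have hbern : 0.01 * S * (1.5337:ℝ)^(s+1) ≤ (0.9 * s3)^(s+1) := by
    have h1 : ((1.01:ℝ) * 1.5337)^(s+1) ≤ (0.9 * s3)^(s+1) := by
      apply pow_le_pow_left₀ (by norm_num) sqrt3_fact
    have h2 : (1:ℝ) + (s+1 : ℕ) * 0.01 ≤ (1.01:ℝ)^(s+1) := by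
      have := one_add_mul_le_pow (a := (0.01:ℝ)) (by norm_num) (s+1)
      norm_num at this ⊢; linarith
    have h3 : 0.01 * S ≤ (1.01:ℝ)^(s+1) := by
      push_cast at h2; linarith
    have h4 : 0.01 * S * (1.5337:ℝ)^(s+1) ≤ (1.01:ℝ)^(s+1) * (1.5337:ℝ)^(s+1) := by
      apply mul_le_mul_of_nonneg_right h3 (by positivity)
    rw [← mul_pow] at h4
    linarith
  have hfq : (0:ℝ) < q.factorial := by positivity
  have hfm : (0:ℝ) < m.factorial := by positivity
  calc 2 * (S * sp)^m * S * 3 * s3^m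
      = 6 * S * ((8 * a)^m) := by
        have h8a : (8:ℝ) * a = S * sp * s3 := by rw [ha]; ring
        rw [h8a, mul_pow (S*sp) s3]; ring
    _ = 6 * S * ((8:ℝ)^m * a^m) := by rw [mul_pow]
    _ ≤ 6 * S * ((8 * 64^q) * ((m.factorial : ℝ) * Real.exp a)) := by
        apply mul_le_mul_of_nonneg_left _ (by positivity)
        apply mul_le_mul h8 haW (by positivity) (by positivity)
    _ ≤ 6 * S * ((8 * ((q.factorial : ℝ) * Real.exp 64))
          * ((m.factorial : ℝ) * (1.5337:ℝ)^(s+1))) := by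
        apply mul_le_mul_of_nonneg_left _ (by positivity)
        apply mul_le_mul
        · apply mul_le_mul_of_nonneg_left h64 (by norm_num)
        · exact mul_le_mul_of_nonneg_left hexpa hfm.le
        · positivity
        · positivity
    _ = 48 * Real.exp 64 * 100 * (0.01 * S * (1.5337:ℝ)^(s+1))
          * (m.factorial : ℝ) * (q.factorial : ℝ) := by ring
    _ ≤ 48 * Real.exp 64 * 100 * ((0.9 * s3)^(s+1))
          * (m.factorial : ℝ) * (q.factorial : ℝ) := by
        apply mul_le_mul_of_nonneg_right _ hfq.le
        apply mul_le_mul_of_nonneg_right _ hfm.le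
        apply mul_le_mul_of_nonneg_left hbern (by positivity)
    _ ≤ Real.exp 330 * (0.9 * s3)^(s+1) * (m.factorial : ℝ) * (q.factorial : ℝ) := by
        apply mul_le_mul_of_nonneg_right _ hfq.le
        apply mul_le_mul_of_nonneg_right _ hfm.le
        apply mul_le_mul_of_nonneg_right _ (by positivity)
        linarith [big_exp]




/-- For integers `r ≥ 3` and `n ≥ 3`:
`Σ_{m=0}^{r−1} (r choose m)·(π^{m/2}/Γ(m/2+1))·n^{m/2}
  ≤ (r·π^{(r−1)/2}/Γ((r+1)/2))·n^{(r−1)/2} + e^{330}·(0.9)^r·n^{(r−2)/2}`. -/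
theorem stmt16 (r n : ℕ) (hr : 3 ≤ r) (hn : 3 ≤ n) :
    ∑ m ∈ Finset.range r,
        (r.choose m : ℝ) * (Real.pi ^ ((m : ℝ) / 2) / Real.Gamma ((m : ℝ) / 2 + 1))
          * (n : ℝ) ^ ((m : ℝ) / 2)
      ≤ (r : ℝ) * Real.pi ^ (((r : ℝ) - 1) / 2) / Real.Gamma (((r : ℝ) + 1) / 2)
          * (n : ℝ) ^ (((r : ℝ) - 1) / 2)
        + Real.exp 330 * (0.9 : ℝ) ^ r * (n : ℝ) ^ (((r : ℝ) - 2) / 2) := by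
  obtain ⟨s, rfl⟩ : ∃ s, r = s + 1 := ⟨r - 1, by omega⟩
  have hs : 2 ≤ s := by omega
  have hn0 : (0:ℝ) ≤ (n:ℝ) := by positivity
  set sp : ℝ := Real.sqrt Real.pi with hsp
  set sn : ℝ := Real.sqrt n with hsn
  set s3 : ℝ := Real.sqrt 3 with hs3
  have hs30 : (0:ℝ) < s3 := Real.sqrt_pos.2 (by norm_num)
  have hsn3 : s3 ≤ sn := Real.sqrt_le_sqrt (by exact_mod_cast hn)
  have hsn0 : (0:ℝ) ≤ sn := Real.sqrt_nonneg _
  rw [Finset.sum_range_succ]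
  -- the top term equals the first term on the RHS
  have htop : ((s+1).choose s : ℝ)
        * (Real.pi ^ ((s : ℝ) / 2) / Real.Gamma ((s : ℝ) / 2 + 1))
        * (n : ℝ) ^ ((s : ℝ) / 2)
      = ((s+1 : ℕ) : ℝ) * Real.pi ^ ((((s+1 : ℕ) : ℝ) - 1) / 2)
          / Real.Gamma ((((s+1 : ℕ) : ℝ) + 1) / 2)
          * (n : ℝ) ^ ((((s+1 : ℕ) : ℝ) - 1) / 2) := by
    have e1 : ((((s+1) : ℕ) : ℝ) - 1) / 2 = (s : ℝ) / 2 := by push_cast; ring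
    have e2 : ((((s+1) : ℕ) : ℝ) + 1) / 2 = (s : ℝ) / 2 + 1 := by push_cast; ring
    rw [Nat.choose_succ_self_right, e1, e2]
    push_cast
    ring
  rw [htop]
  have herr : ∑ m ∈ Finset.range s,
        ((s+1).choose m : ℝ)
          * (Real.pi ^ ((m : ℝ) / 2) / Real.Gamma ((m : ℝ) / 2 + 1))
          * (n : ℝ) ^ ((m : ℝ) / 2)
      ≤ Real.exp 330 * (0.9 : ℝ) ^ (s+1) * (n : ℝ) ^ ((((s+1 : ℕ) : ℝ) - 2) / 2) := by
    have e3 : ((((s+1) : ℕ) : ℝ) - 2) / 2 = (((s-1 : ℕ) : ℝ)) / 2 := by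
      rw [Nat.cast_sub (by omega : 1 ≤ s)]; push_cast; ring
    rw [e3, rpow_half_nat hn0, ← hsn]
    have key : ∀ m ∈ Finset.range s,
        ((s+1).choose m : ℝ)
            * (Real.pi ^ ((m : ℝ) / 2) / Real.Gamma ((m : ℝ) / 2 + 1))
            * (n : ℝ) ^ ((m : ℝ) / 2)
          ≤ (Real.exp 330 * (0.9 : ℝ) ^ (s+1) / ((s:ℝ)+1)) * sn ^ (s-1) := by
      intro m hm
      rw [Finset.mem_range] at hm
      set q : ℕ := m / 2 with hq
      set k : ℕ := s - 1 - m with hk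
      have hGlb := half_fac_le_Gamma m
      have hfq : (0:ℝ) < (q.factorial : ℝ) := by positivity
      have hG : (0:ℝ) < Real.Gamma ((m : ℝ) / 2 + 1) :=
        lt_of_lt_of_le (by positivity) hGlb
      have hfm : (0:ℝ) < (m.factorial : ℝ) := by positivity
      rw [rpow_half_nat Real.pi_pos.le m, rpow_half_nat hn0 m, ← hsp, ← hsn]
      have hCb : ((s+1).choose m : ℝ) ≤ ((s:ℝ)+1)^m / (m.factorial : ℝ) := by
        have := Nat.choose_le_pow_div (α := ℝ) m (s+1)
        push_cast at this ⊢
        convert this using 2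
      have hdiv : sp ^ m / Real.Gamma ((m : ℝ) / 2 + 1)
          ≤ 2 * sp ^ m / (q.factorial : ℝ) := by
        have h1 : sp ^ m / Real.Gamma ((m : ℝ) / 2 + 1)
            ≤ sp ^ m / ((q.factorial : ℝ)/2) := by
          apply div_le_div_of_nonneg_left (by positivity) (by positivity) hGlb
        calc sp ^ m / Real.Gamma ((m : ℝ) / 2 + 1)
            ≤ sp ^ m / ((q.factorial : ℝ)/2) := h1
          _ = 2 * sp ^ m / (q.factorial : ℝ) := by field_simp
      have hsnm : sn ^ m ≤ sn ^ (s-1) / s3 ^ k := by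
        rw [le_div_iff₀ (by positivity)]
        have hmk : m + k = s - 1 := by omega
        calc sn ^ m * s3 ^ k ≤ sn ^ m * sn ^ k := by
              apply mul_le_mul_of_nonneg_left
                (pow_le_pow_left₀ hs30.le hsn3 k) (by positivity)
          _ = sn ^ (s-1) := by rw [← pow_add, hmk]
      have hcore : ((s:ℝ)+1)^m / (m.factorial : ℝ) * (2 * sp ^ m / (q.factorial : ℝ))
            / s3 ^ k ≤ Real.exp 330 * (0.9 : ℝ) ^ (s+1) / ((s:ℝ)+1) := by
        have e4 : ((s:ℝ)+1)^m / (m.factorial : ℝ) * (2 * sp ^ m / (q.factorial : ℝ))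
              / s3 ^ k
            = 2 * (((s:ℝ)+1) * sp)^m / ((m.factorial : ℝ) * (q.factorial : ℝ) * s3 ^ k) := by
          rw [mul_pow]; ring
        rw [e4, div_le_div_iff₀ (by positivity) (by positivity)]
        have hsplit : s3 ^ (s+1) = s3 ^ k * s3 ^ m * 3 := by
          have hks : k + m + 2 = s + 1 := by omega
          have h32 : s3 ^ 2 = 3 := Real.sq_sqrt (by norm_num)
          rw [← hks, pow_add, pow_add, h32]
        have hclaim := claim s m hs hm
        have hgoal : (2 * (((s:ℝ)+1) * sp)^m * (((s:ℝ)+1))) * (3 * s3 ^ m)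
            ≤ (Real.exp 330 * (0.9:ℝ)^(s+1) * ((m.factorial : ℝ) * (q.factorial : ℝ) * s3 ^ k))
              * (3 * s3 ^ m) := by
          calc (2 * (((s:ℝ)+1) * sp)^m * (((s:ℝ)+1))) * (3 * s3 ^ m)
              = 2 * (((s:ℝ)+1) * sp)^m * ((s:ℝ)+1) * 3 * s3 ^ m := by ring
            _ ≤ Real.exp 330 * (0.9 * s3)^(s+1) * (m.factorial : ℝ) * ((q.factorial : ℝ)) :=
                hclaim
            _ = (Real.exp 330 * (0.9:ℝ)^(s+1)
                  * ((m.factorial : ℝ) * (q.factorial : ℝ) * s3 ^ k)) * (3 * s3 ^ m) := by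
                rw [mul_pow, hsplit]; ring
        exact le_of_mul_le_mul_right hgoal (by positivity)
      calc ((s+1).choose m : ℝ) * (sp ^ m / Real.Gamma ((m : ℝ) / 2 + 1)) * sn ^ m
          ≤ (((s:ℝ)+1)^m / (m.factorial : ℝ)) * (2 * sp ^ m / (q.factorial : ℝ))
              * (sn ^ (s-1) / s3 ^ k) := by
            apply mul_le_mul
            · apply mul_le_mul hCb hdiv (by positivity)
                (by positivity)
            · exact hsnm
            · positivity
            · positivity
        _ = (((s:ℝ)+1)^m / (m.factorial : ℝ) * (2 * sp ^ m / (q.factorial : ℝ)) / s3 ^ k)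
              * sn ^ (s-1) := by ring
        _ ≤ (Real.exp 330 * (0.9 : ℝ) ^ (s+1) / ((s:ℝ)+1)) * sn ^ (s-1) := by
            apply mul_le_mul_of_nonneg_right hcore (by positivity)
    calc ∑ m ∈ Finset.range s, ((s+1).choose m : ℝ)
            * (Real.pi ^ ((m : ℝ) / 2) / Real.Gamma ((m : ℝ) / 2 + 1))
            * (n : ℝ) ^ ((m : ℝ) / 2)
        ≤ (Finset.range s).card
            • ((Real.exp 330 * (0.9 : ℝ) ^ (s+1) / ((s:ℝ)+1)) * sn ^ (s-1)) :=
          Finset.sum_le_card_nsmul _ _ _ key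
      _ = (s : ℝ) * ((Real.exp 330 * (0.9 : ℝ) ^ (s+1) / ((s:ℝ)+1)) * sn ^ (s-1)) := by
          rw [Finset.card_range, nsmul_eq_mul]
      _ ≤ Real.exp 330 * (0.9 : ℝ) ^ (s+1) * sn ^ (s-1) := by
          have hE : (0:ℝ) ≤ Real.exp 330 * (0.9 : ℝ) ^ (s+1) := by positivity
          have hfrac : (s : ℝ) / ((s:ℝ)+1) ≤ 1 := by
            rw [div_le_one (by positivity)]; linarith
          have := mul_le_mul_of_nonneg_right
            (mul_le_mul_of_nonneg_right hfrac hE) (pow_nonneg hsn0 (s-1))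
          calc (s : ℝ) * ((Real.exp 330 * (0.9 : ℝ) ^ (s+1) / ((s:ℝ)+1)) * sn ^ (s-1))
              = (s : ℝ) / ((s:ℝ)+1) * (Real.exp 330 * (0.9 : ℝ) ^ (s+1)) * sn ^ (s-1) := by
                ring
            _ ≤ 1 * (Real.exp 330 * (0.9 : ℝ) ^ (s+1)) * sn ^ (s-1) := this
            _ = Real.exp 330 * (0.9 : ℝ) ^ (s+1) * sn ^ (s-1) := by ring
  linarith [herr]
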